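/- (Eckart–Young for vectors) Let v ∈ H_L ⊗ H_R have Schmidt decomposition v = Σ_j λ_j a_j ⊗ b_j with λ_1 ≥ λ_2 ≥ ... Then for any integer D ≥ 1 with trim_D(v) ≠ 0, the unit vector v' = trim_D(v)/‖trim_D(v)‖ satisfies ⟨v', v⟩ ≥ |⟨w, v⟩| for every unit vector w of Schmidt rank at most D. -/

import Mathlib

/-- Elementary tensor of two vectors, in the function model of `H_L ⊗ H_R`. -/
noncomputable def tens {p q : ℕ} (a : EuclideanSpace ℂ (Fin p)) (b : EuclideanSpace ℂ (Fin q)) :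
    EuclideanSpace ℂ (Fin p × Fin q) := WithLp.toLp 2 (fun x : Fin p × Fin q => a x.1 * b x.2)

lemma inner_tens {p q : ℕ} (a c : EuclideanSpace ℂ (Fin p)) (b d : EuclideanSpace ℂ (Fin q)) :
    (inner ℂ (tens a b) (tens c d) : ℂ) = inner ℂ a c * inner ℂ b d := by
  simp only [tens, PiLp.inner_apply, RCLike.inner_apply]
  rw [Fintype.sum_prod_type, Finset.sum_mul_sum]
  refine Finset.sum_congr rfl fun i _ => Finset.sum_congr rfl fun j _ => ?_
  rw [map_mul]; ring

lemma inner_sum_smul_tens {p q N M : ℕ} (c : Fin N → ℂ) (d : Fin M → ℂ)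
    (a : Fin N → EuclideanSpace ℂ (Fin p)) (b : Fin N → EuclideanSpace ℂ (Fin q))
    (a' : Fin M → EuclideanSpace ℂ (Fin p)) (b' : Fin M → EuclideanSpace ℂ (Fin q))
    (F : Finset (Fin N)) (G : Finset (Fin M)) :
    (inner ℂ (∑ j ∈ F, c j • tens (a j) (b j)) (∑ k ∈ G, d k • tens (a' k) (b' k)) : ℂ)
      = ∑ j ∈ F, ∑ k ∈ G, (starRingEnd ℂ) (c j) * d k *
          ((inner ℂ (a j) (a' k) : ℂ) * (inner ℂ (b j) (b' k) : ℂ)) := by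
  rw [sum_inner]
  refine Finset.sum_congr rfl fun j _ => ?_
  rw [inner_sum]
  refine Finset.sum_congr rfl fun k _ => ?_
  rw [inner_smul_left, inner_smul_right, inner_tens]; ring


lemma sum_sq_mul_le_aux {N D : ℕ} (lam : Fin N → ℝ) (hlam : ∀ j, 0 ≤ lam j)
    (hmono : ∀ j k : Fin N, j ≤ k → lam k ≤ lam j)
    (mu : Fin N → ℝ) (hmu0 : ∀ j, 0 ≤ mu j) (hmu1 : ∀ j, mu j ≤ 1)
    (hsum : ∑ j, mu j ≤ (D : ℝ)) :
    ∑ j, lam j ^ 2 * mu j ≤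
      ∑ j ∈ Finset.univ.filter (fun j : Fin N => (j : ℕ) < D), lam j ^ 2 := by
  by_cases h : D < N
  · set F : Finset (Fin N) := Finset.univ.filter (fun j : Fin N => (j : ℕ) < D) with hF
    set jD : Fin N := ⟨D, h⟩ with hjD
    set c : ℝ := lam jD ^ 2 with hc
    have hc0 : 0 ≤ c := sq_nonneg _
    have hcard : F.card = D := by
      have : F = Finset.map (Fin.castLEEmb h.le) Finset.univ := by
        ext j
        simp only [hF, Finset.mem_filter, Finset.mem_univ, true_and, Finset.mem_map,
          Fin.castLEEmb_apply]
        constructor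
        · intro hj; exact ⟨⟨j, hj⟩, by ext; simp⟩
        · rintro ⟨k, rfl⟩; exact k.isLt
      rw [this]; simp
    have key : ∀ j ∈ F, c ≤ lam j ^ 2 := by
      intro j hj
      have hjlt : (j : ℕ) < D := (Finset.mem_filter.mp hj).2
      have : lam jD ≤ lam j := hmono j jD (by simp [hjD, Fin.le_def]; omega)
      exact pow_le_pow_left₀ (hlam _) this 2
    have key2 : ∀ j ∈ Finset.univ.filter (fun j : Fin N => ¬ (j : ℕ) < D),
        lam j ^ 2 ≤ c := by
      intro j hj
      have hjge : ¬ (j : ℕ) < D := (Finset.mem_filter.mp hj).2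
      have : lam j ≤ lam jD := hmono jD j (by simp [hjD, Fin.le_def]; omega)
      exact pow_le_pow_left₀ (hlam _) this 2
    rw [← Finset.sum_filter_add_sum_filter_not Finset.univ
      (fun j : Fin N => (j : ℕ) < D) (fun j => lam j ^ 2 * mu j)]
    have h1 : ∑ j ∈ Finset.univ.filter (fun j : Fin N => ¬ (j : ℕ) < D),
        lam j ^ 2 * mu j ≤ c * ((D : ℝ) - ∑ j ∈ F, mu j) := by
      calc ∑ j ∈ Finset.univ.filter (fun j : Fin N => ¬ (j : ℕ) < D), lam j ^ 2 * mu j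
          ≤ ∑ j ∈ Finset.univ.filter (fun j : Fin N => ¬ (j : ℕ) < D), c * mu j :=
            Finset.sum_le_sum fun j hj =>
              mul_le_mul_of_nonneg_right (key2 j hj) (hmu0 j)
        _ = c * ∑ j ∈ Finset.univ.filter (fun j : Fin N => ¬ (j : ℕ) < D), mu j := by
            rw [Finset.mul_sum]
        _ ≤ c * ((D : ℝ) - ∑ j ∈ F, mu j) := by
            apply mul_le_mul_of_nonneg_left _ hc0
            have := Finset.sum_filter_add_sum_filter_not Finset.univ
              (fun j : Fin N => (j : ℕ) < D) mu
            have h2 : (∑ j ∈ F, mu j) + ∑ j ∈ Finset.univ.filter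
                (fun j : Fin N => ¬ (j : ℕ) < D), mu j ≤ (D : ℝ) := by
              rw [hF, this]; exact hsum
            linarith
    have hcd : c * (D : ℝ) = ∑ _j ∈ F, c := by
      rw [Finset.sum_const, hcard, nsmul_eq_mul, mul_comm]
    have h3 : ∑ j ∈ F, lam j ^ 2 * mu j + c * ((D : ℝ) - ∑ j ∈ F, mu j)
        ≤ ∑ j ∈ F, lam j ^ 2 := by
      have : ∑ j ∈ F, lam j ^ 2 * mu j + c * ((D : ℝ) - ∑ j ∈ F, mu j)
          = ∑ j ∈ F, (lam j ^ 2 * mu j + c * (1 - mu j)) := by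
        rw [Finset.sum_add_distrib, mul_sub, hcd, Finset.mul_sum, ← Finset.sum_sub_distrib]
        ring_nf
      rw [this]
      refine Finset.sum_le_sum fun j hj => ?_
      nlinarith [key j hj, hmu0 j, hmu1 j]
    linarith
  · have hF : Finset.univ.filter (fun j : Fin N => (j : ℕ) < D) = Finset.univ := by
      refine Finset.filter_true_of_mem fun j _ => lt_of_lt_of_le j.isLt (not_lt.mp h)
    rw [hF]
    refine Finset.sum_le_sum fun j _ => ?_
    nlinarith [hmu1 j, hmu0 j, sq_nonneg (lam j)]


set_option maxHeartbeats 1000000 in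
/-- Eckart–Young for vectors: if `v = Σ_j λ_j a_j ⊗ b_j` is a Schmidt
decomposition (decreasing coefficients) and `t = trim_D(v) ≠ 0`, then the unit vector
`v' = t/‖t‖` satisfies `⟨v', v⟩ ≥ |⟨w, v⟩|` for every unit vector `w` of Schmidt rank
at most `D`. -/
theorem eckart_young_vectors
    {p q N D : ℕ} (hD : 1 ≤ D)
    (v : EuclideanSpace ℂ (Fin p × Fin q))
    (a : Fin N → EuclideanSpace ℂ (Fin p)) (b : Fin N → EuclideanSpace ℂ (Fin q))
    (ha : Orthonormal ℂ a) (hb : Orthonormal ℂ b)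
    (lam : Fin N → ℝ) (hlam : ∀ j, 0 ≤ lam j)
    (hmono : ∀ j k : Fin N, j ≤ k → lam k ≤ lam j)
    (hdecomp : v = ∑ j, (lam j : ℂ) • tens (a j) (b j))
    (t : EuclideanSpace ℂ (Fin p × Fin q))
    (ht : t = ∑ j ∈ Finset.univ.filter (fun j : Fin N => (j : ℕ) < D),
        (lam j : ℂ) • tens (a j) (b j))
    (ht0 : t ≠ 0) :
    ∀ (w : EuclideanSpace ℂ (Fin p × Fin q)), ‖w‖ = 1 →
      ∀ (x : Fin D → EuclideanSpace ℂ (Fin p)) (y : Fin D → EuclideanSpace ℂ (Fin q)),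
        w = ∑ k, tens (x k) (y k) →
        ‖(inner ℂ w v : ℂ)‖ ≤ (inner ℂ ((‖t‖ : ℂ)⁻¹ • t) v : ℂ).re := by
  classical
  intro w hw x y hwxy
  set F : Finset (Fin N) := Finset.univ.filter (fun j : Fin N => (j : ℕ) < D) with hFdef
  set S : ℝ := ∑ j ∈ F, lam j ^ 2 with hSdef
  have hite : ∀ j k : Fin N,
      (inner ℂ (a j) (a k) : ℂ) * (inner ℂ (b j) (b k) : ℂ) = if j = k then 1 else 0 := by
    intro j k
    rw [orthonormal_iff_ite.mp ha, orthonormal_iff_ite.mp hb]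
    by_cases hjk : j = k <;> simp [hjk]
  -- ⟪t, v⟫ = S
  have key : ∀ G : Finset (Fin N), (G ⊆ F) →
      (inner ℂ (∑ j ∈ F, (lam j : ℂ) • tens (a j) (b j))
        (∑ j ∈ G, (lam j : ℂ) • tens (a j) (b j)) : ℂ)
        = ((∑ j ∈ G, lam j ^ 2 : ℝ) : ℂ) := by
    intro G hG
    rw [inner_sum_smul_tens]
    rw [Finset.sum_comm]
    push_cast
    refine Finset.sum_congr rfl fun j hj => ?_
    have hjF : j ∈ F := hG hj
    rw [Finset.sum_eq_single_of_mem j hjF]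
    · rw [hite, if_pos rfl, Complex.conj_ofReal]; ring
    · intro k _ hkj
      rw [hite, if_neg hkj, mul_zero]
  have htv : (inner ℂ t v : ℂ) = (S : ℂ) := by
    rw [ht, hdecomp]
    rw [show (∑ j, (lam j : ℂ) • tens (a j) (b j))
        = ∑ j ∈ F, (lam j : ℂ) • tens (a j) (b j)
          + ∑ j ∈ Fᶜ, (lam j : ℂ) • tens (a j) (b j) from by
      rw [← Finset.sum_union disjoint_compl_right]
      congr 1
      simp]
    rw [inner_add_right, key F (Finset.Subset.refl F), hSdef]
    have hzero : (inner ℂ (∑ j ∈ F, (lam j : ℂ) • tens (a j) (b j))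
        (∑ j ∈ Fᶜ, (lam j : ℂ) • tens (a j) (b j)) : ℂ) = 0 := by
      rw [inner_sum_smul_tens]
      refine Finset.sum_eq_zero fun j hj => Finset.sum_eq_zero fun k hk => ?_
      have hjk : j ≠ k := fun h => (Finset.mem_compl.mp hk) (h ▸ hj)
      rw [hite, if_neg hjk, mul_zero]
    rw [hzero, add_zero]
  have htt : ‖t‖ ^ 2 = S := by
    have h1 : (inner ℂ t t : ℂ) = (S : ℂ) := by
      rw [ht, key F (Finset.Subset.refl F), hSdef]
    have h2 := congrArg Complex.re h1
    rw [Complex.ofReal_re] at h2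
    rw [← h2]
    exact (inner_self_eq_norm_sq (𝕜 := ℂ) t).symm
  have htnorm : (0:ℝ) < ‖t‖ := norm_pos_iff.mpr ht0
  have hrhs : (inner ℂ ((‖t‖ : ℂ)⁻¹ • t) v : ℂ).re = ‖t‖ := by
    rw [inner_smul_left, htv]
    rw [show (starRingEnd ℂ) ((‖t‖ : ℂ)⁻¹) = ((‖t‖⁻¹ : ℝ) : ℂ) from by
      rw [map_inv₀, Complex.conj_ofReal, Complex.ofReal_inv]]
    rw [← Complex.ofReal_mul, Complex.ofReal_re, ← htt]
    field_simp
  rw [hrhs]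
  -- projection setup
  set K : Submodule ℂ (EuclideanSpace ℂ (Fin p)) := Submodule.span ℂ (Set.range x) with hK
  set Pa : Fin N → EuclideanSpace ℂ (Fin p) :=
    fun j => (K.orthogonalProjectionOnto (a j) : EuclideanSpace ℂ (Fin p)) with hPa
  set u : EuclideanSpace ℂ (Fin p × Fin q) := ∑ j, (lam j : ℂ) • tens (Pa j) (b j) with hu
  have hproj : ∀ (z : EuclideanSpace ℂ (Fin p)), z ∈ K → ∀ j : Fin N,
      (inner ℂ z (a j) : ℂ) = inner ℂ z (Pa j) := by
    intro z hz j
    have h := Submodule.inner_orthogonalProjectionOnto_eq_of_mem_left (K := K) ⟨z, hz⟩ (a j)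
    rw [Submodule.coe_inner] at h
    exact h.symm
  have hwv : (inner ℂ w v : ℂ) = inner ℂ w u := by
    have hw1 : w = ∑ k, (1 : ℂ) • tens (x k) (y k) := by simpa [one_smul] using hwxy
    rw [hdecomp, hu, hw1]
    rw [inner_sum_smul_tens (fun _ => (1:ℂ)) (fun j => ((lam j : ℝ) : ℂ)) x y a b,
        inner_sum_smul_tens (fun _ => (1:ℂ)) (fun j => ((lam j : ℝ) : ℂ)) x y Pa b]
    refine Finset.sum_congr rfl fun k _ => Finset.sum_congr rfl fun j _ => ?_
    rw [hproj (x k) (Submodule.subset_span ⟨k, rfl⟩) j]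
  set mu : Fin N → ℝ := fun j => ‖Pa j‖ ^ 2 with hmu
  have hu2 : ‖u‖ ^ 2 = ∑ j, lam j ^ 2 * mu j := by
    have h1 : (inner ℂ u u : ℂ) = ((∑ j, lam j ^ 2 * mu j : ℝ) : ℂ) := by
      rw [hu, inner_sum_smul_tens]
      push_cast [hmu]
      refine Finset.sum_congr rfl fun j _ => ?_
      rw [Finset.sum_eq_single_of_mem j (Finset.mem_univ j)]
      · rw [orthonormal_iff_ite.mp hb, if_pos rfl, Complex.conj_ofReal,
          inner_self_eq_norm_sq_to_K]
        push_cast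
        ring_nf
        first
        | rfl
        | norm_cast
        | (with_unfolding_all rfl)
        | simp
      · intro k _ hkj
        rw [orthonormal_iff_ite.mp hb, if_neg (Ne.symm hkj), mul_zero, mul_zero]
    have h2 := congrArg Complex.re h1
    rw [Complex.ofReal_re] at h2
    rw [← h2]
    exact (inner_self_eq_norm_sq (𝕜 := ℂ) u).symm
  have hmu0 : ∀ j, 0 ≤ mu j := fun j => sq_nonneg _
  have hmu1 : ∀ j, mu j ≤ 1 := by
    intro j
    have h1 : ‖Pa j‖ ≤ 1 := by
      have h2 := ContinuousLinearMap.le_opNorm K.orthogonalProjectionOnto (a j)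
      have h3 := K.orthogonalProjectionOnto_norm_le
      have h4 : ‖a j‖ = 1 := ha.1 j
      calc ‖Pa j‖ = ‖K.orthogonalProjectionOnto (a j)‖ := rfl
        _ ≤ ‖K.orthogonalProjectionOnto‖ * ‖a j‖ := h2
        _ ≤ 1 := by rw [h4, mul_one]; exact h3
    calc mu j = ‖Pa j‖ ^ 2 := rfl
      _ ≤ 1 := by nlinarith [norm_nonneg (Pa j)]
  have hmusum : ∑ j, mu j ≤ (D : ℝ) := by
    set m := Module.finrank ℂ K with hm
    have hmD : m ≤ D := by
      have := finrank_range_le_card (R := ℂ) x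
      simpa [Set.finrank] using this
    set e := stdOrthonormalBasis ℂ K with he
    have hmuj : ∀ j, mu j = ∑ i, ‖(inner ℂ ((e i : EuclideanSpace ℂ (Fin p))) (a j) : ℂ)‖ ^ 2 := by
      intro j
      have hrepr : ∀ i, e.repr (K.orthogonalProjectionOnto (a j)) i
          = (inner ℂ ((e i : EuclideanSpace ℂ (Fin p))) (a j) : ℂ) := by
        intro i
        rw [OrthonormalBasis.repr_apply_apply]
        exact Submodule.inner_orthogonalProjectionOnto_eq_of_mem_left (K := K) (e i) (a j)
      calc mu j = ‖K.orthogonalProjectionOnto (a j)‖ ^ 2 := rfl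
        _ = ‖e.repr (K.orthogonalProjectionOnto (a j))‖ ^ 2 := by rw [LinearIsometryEquiv.norm_map]
        _ = ∑ i, ‖e.repr (K.orthogonalProjectionOnto (a j)) i‖ ^ 2 := by
            rw [EuclideanSpace.norm_eq, Real.sq_sqrt (Finset.sum_nonneg fun i _ => sq_nonneg _)]
        _ = ∑ i, ‖(inner ℂ ((e i : EuclideanSpace ℂ (Fin p))) (a j) : ℂ)‖ ^ 2 :=
            Finset.sum_congr rfl fun i _ => by rw [hrepr i]
    calc ∑ j, mu j = ∑ j, ∑ i, ‖(inner ℂ ((e i : EuclideanSpace ℂ (Fin p))) (a j) : ℂ)‖ ^ 2 :=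
          Finset.sum_congr rfl fun j _ => hmuj j
      _ = ∑ i, ∑ j, ‖(inner ℂ ((e i : EuclideanSpace ℂ (Fin p))) (a j) : ℂ)‖ ^ 2 := by rw [Finset.sum_comm]
      _ ≤ ∑ _i : Fin m, (1 : ℝ) := by
          refine Finset.sum_le_sum fun i _ => ?_
          have hb1 : ‖((e i : EuclideanSpace ℂ (Fin p)))‖ = 1 := by
            have := e.orthonormal.1 i
            exact this
          have hbess := ha.sum_inner_products_le (s := Finset.univ)
            ((e i : EuclideanSpace ℂ (Fin p)))
          rw [hb1] at hbess
          calc ∑ j, ‖(inner ℂ ((e i : EuclideanSpace ℂ (Fin p))) (a j) : ℂ)‖ ^ 2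
              = ∑ j, ‖(inner ℂ (a j) ((e i : EuclideanSpace ℂ (Fin p))) : ℂ)‖ ^ 2 :=
                Finset.sum_congr rfl fun j _ => by rw [norm_inner_symm]
            _ ≤ 1 ^ 2 := hbess
            _ = 1 := one_pow 2
      _ = (m : ℝ) := by simp
      _ ≤ (D : ℝ) := Nat.cast_le.mpr hmD
  have hkey := sum_sq_mul_le_aux lam hlam hmono mu hmu0 hmu1 hmusum
  have hwu : ‖(inner ℂ w v : ℂ)‖ ≤ ‖u‖ := by
    rw [hwv]
    calc ‖(inner ℂ w u : ℂ)‖ ≤ ‖w‖ * ‖u‖ := norm_inner_le_norm w u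
      _ = ‖u‖ := by rw [hw, one_mul]
  have hfin : ‖(inner ℂ w v : ℂ)‖ ^ 2 ≤ ‖t‖ ^ 2 := by
    calc ‖(inner ℂ w v : ℂ)‖ ^ 2 ≤ ‖u‖ ^ 2 := pow_le_pow_left₀ (norm_nonneg _) hwu 2
      _ = ∑ j, lam j ^ 2 * mu j := hu2
      _ ≤ S := hkey
      _ = ‖t‖ ^ 2 := htt.symm
  have hres := Real.sqrt_le_sqrt hfin
  rwa [Real.sqrt_sq (norm_nonneg _), Real.sqrt_sq (norm_nonneg _)] at hres
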